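/- Let ℓ ≥ 1 and 0 < a < b. The sets Ĝ_1(a,b), …, Ĝ_{2ℓ}(a,b) are pairwise disjoint: if i, j ∈ {1,…,2ℓ} with i ≠ j, then no pair (α,u) ∈ [0,∞) × S^{ℓ−1} belongs to both Ĝ_i(a,b) and Ĝ_j(a,b). -/

import Mathlib

open MeasureTheory

noncomputable section

/-- The hyperplane `H(α,u) = {x : ⟨x,u⟩ = α}` in `ℝ^ℓ`. -/
def Hplane (ℓ : ℕ) (α : ℝ) (u : EuclideanSpace ℝ (Fin ℓ)) : Set (EuclideanSpace ℝ (Fin ℓ)) :=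
  {x | (inner ℝ x u : ℝ) = α}

/-- The closed half-space `H⁻(α,u) = {x : ⟨x,u⟩ ≤ α}`. -/
def Hminus (ℓ : ℕ) (α : ℝ) (u : EuclideanSpace ℝ (Fin ℓ)) : Set (EuclideanSpace ℝ (Fin ℓ)) :=
  {x | (inner ℝ x u : ℝ) ≤ α}

/-- The closed half-space `H⁺(α,u) = {x : ⟨x,u⟩ ≥ α}`. -/
def Hplus (ℓ : ℕ) (α : ℝ) (u : EuclideanSpace ℝ (Fin ℓ)) : Set (EuclideanSpace ℝ (Fin ℓ)) :=
  {x | α ≤ (inner ℝ x u : ℝ)}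

/-- The hyperplane `H(α,u)` separates the sets `A` and `B`. -/
def Separates {ℓ : ℕ} (A B : Set (EuclideanSpace ℝ (Fin ℓ))) (α : ℝ)
    (u : EuclideanSpace ℝ (Fin ℓ)) : Prop :=
  (A ⊆ Hplus ℓ α u ∧ B ⊆ Hminus ℓ α u) ∨ (A ⊆ Hminus ℓ α u ∧ B ⊆ Hplus ℓ α u)

/-- The facet `f_i(c) = {x : x_i = c, |x_j| ≤ c for j ≠ i}` of the cube `[−c,c]^ℓ`. -/
def facetBase (ℓ : ℕ) (i : Fin ℓ) (c : ℝ) : Set (EuclideanSpace ℝ (Fin ℓ)) :=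
  {x | x i = c ∧ ∀ j, j ≠ i → |x j| ≤ c}

/-- The `2ℓ` facets of the cube `[−c,c]^ℓ`, indexed by `Fin ℓ ⊕ Fin ℓ`:
`Sum.inl i` is `f_i(c)` and `Sum.inr i` is `f_{i+ℓ}(c) = −f_i(c)`. -/
def facet (ℓ : ℕ) (i : Fin ℓ ⊕ Fin ℓ) (c : ℝ) : Set (EuclideanSpace ℝ (Fin ℓ)) :=
  match i with
  | Sum.inl i => facetBase ℓ i c
  | Sum.inr i => (fun x => -x) '' facetBase ℓ i c

/-- The unit sphere `S^{ℓ−1}` in `ℝ^ℓ`. -/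
abbrev unitSphere (ℓ : ℕ) : Set (EuclideanSpace ℝ (Fin ℓ)) :=
  Metric.sphere (0 : EuclideanSpace ℝ (Fin ℓ)) 1

/-- `Ĝ_i(a,b)`: the set of parameters `(α,u) ∈ [0,∞) × S^{ℓ−1}` such that `H(α,u)`
separates `f_i(a)` and `f_i(b)`. -/
def Ghat (ℓ : ℕ) (i : Fin ℓ ⊕ Fin ℓ) (a b : ℝ) : Set (ℝ × unitSphere ℓ) :=
  {p | 0 ≤ p.1 ∧ Separates (facet ℓ i a) (facet ℓ i b) p.1 (p.2 : EuclideanSpace ℝ (Fin ℓ))}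

/-- The hyperplane measure `μ = γ·(λ ⊗ θ)` on `ℝ × S^{ℓ−1}`. -/
def hypMeasure (ℓ : ℕ) (γ : ℝ) (θ : Measure (unitSphere ℓ)) : Measure (ℝ × unitSphere ℓ) :=
  ENNReal.ofReal γ • ((volume : Measure ℝ).prod θ)



/-- Axis index of a facet. -/
def axIdx {ℓ : ℕ} : Fin ℓ ⊕ Fin ℓ → Fin ℓ := Sum.elim id id

/-- Sign of a facet. -/
def sgn {ℓ : ℕ} : Fin ℓ ⊕ Fin ℓ → ℝ := Sum.elim (fun _ => 1) (fun _ => -1)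

lemma sgn_sq {ℓ : ℕ} (i : Fin ℓ ⊕ Fin ℓ) : sgn i * sgn i = 1 := by
  cases i <;> simp [sgn]

lemma abs_sgn {ℓ : ℕ} (i : Fin ℓ ⊕ Fin ℓ) : |sgn i| = 1 := by
  cases i <;> simp [sgn]

lemma sgn_ne_zero {ℓ : ℕ} (i : Fin ℓ ⊕ Fin ℓ) : sgn i ≠ 0 := by
  cases i <;> simp [sgn]

lemma mem_facet_iff {ℓ : ℕ} (i : Fin ℓ ⊕ Fin ℓ) (c : ℝ) (x : EuclideanSpace ℝ (Fin ℓ)) :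
    x ∈ facet ℓ i c ↔ x (axIdx i) = sgn i * c ∧ ∀ j, j ≠ axIdx i → |x j| ≤ c := by
  cases i with
  | inl k => simp [facet, facetBase, axIdx, sgn]
  | inr k =>
    constructor
    · rintro ⟨y, ⟨hy1, hy2⟩, rfl⟩
      refine ⟨?_, fun j hj => ?_⟩
      · show -(y k) = -1 * c
        rw [hy1]; ring
      · show |-(y j)| ≤ c
        rw [abs_neg]; exact hy2 j (by simpa [axIdx] using hj)
    · rintro ⟨h1, h2⟩
      refine ⟨-x, ⟨?_, fun j hj => ?_⟩, by simp⟩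
      · show -(x k) = c
        have : x k = -1 * c := h1
        rw [this]; ring
      · show |-(x j)| ≤ c
        rw [abs_neg]; exact h2 j (by simpa [axIdx] using hj)

lemma single_mem_facet {ℓ : ℕ} (i : Fin ℓ ⊕ Fin ℓ) {c : ℝ} (hc : 0 < c) :
    EuclideanSpace.single (axIdx i) (sgn i * c) ∈ facet ℓ i c := by
  rw [mem_facet_iff]
  refine ⟨by simp, fun j hj => ?_⟩
  rw [EuclideanSpace.single_apply, if_neg hj]
  simpa using hc.le

lemma smul_mem_facet {ℓ : ℕ} (i : Fin ℓ ⊕ Fin ℓ) {a b : ℝ} (ha : 0 < a) (hb : 0 < b)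
    {x : EuclideanSpace ℝ (Fin ℓ)} (hx : x ∈ facet ℓ i a) : (b / a) • x ∈ facet ℓ i b := by
  rw [mem_facet_iff] at hx ⊢
  have hba : (0:ℝ) < b / a := div_pos hb ha
  refine ⟨?_, fun j hj => ?_⟩
  · show (b / a) * x (axIdx i) = sgn i * b
    rw [hx.1]
    field_simp
  · show |(b / a) * x j| ≤ b
    rw [abs_mul, abs_of_pos hba]
    calc (b / a) * |x j| ≤ (b / a) * a := by
          exact mul_le_mul_of_nonneg_left (hx.2 j hj) hba.le
      _ = b := by field_simp

/-- If all points of `facet ℓ i a` are orthogonal to `u`, then `u = 0`. -/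
lemma u_eq_zero_of_facet {ℓ : ℕ} (i : Fin ℓ ⊕ Fin ℓ) {a : ℝ} (ha : 0 < a)
    {u : EuclideanSpace ℝ (Fin ℓ)}
    (h : ∀ x ∈ facet ℓ i a, (inner ℝ x u : ℝ) = 0) : u = 0 := by
  have hbase := h _ (single_mem_facet i ha)
  rw [EuclideanSpace.inner_single_left] at hbase
  simp only [starRingEnd_apply, star_trivial] at hbase
  have hk : u (axIdx i) = 0 := by
    rcases mul_eq_zero.mp hbase with h' | h'
    · exact absurd h' (mul_ne_zero (sgn_ne_zero i) ha.ne')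
    · exact h'
  ext j
  by_cases hj : j = axIdx i
  · rw [hj]; exact hk
  · have hmem : EuclideanSpace.single (axIdx i) (sgn i * a) + EuclideanSpace.single j a
        ∈ facet ℓ i a := by
      rw [mem_facet_iff]
      refine ⟨?_, fun j' hj' => ?_⟩
      · show (EuclideanSpace.single (axIdx i) (sgn i * a)) (axIdx i)
            + (EuclideanSpace.single j a) (axIdx i) = sgn i * a
        rw [EuclideanSpace.single_apply, EuclideanSpace.single_apply]
        rw [if_pos rfl, if_neg (fun h' => hj h'.symm)]
        ring
      · show |(EuclideanSpace.single (axIdx i) (sgn i * a)) j'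
            + (EuclideanSpace.single j a) j'| ≤ a
        rw [EuclideanSpace.single_apply, EuclideanSpace.single_apply, if_neg hj']
        by_cases h'' : j' = j
        · rw [if_pos h'', zero_add, abs_of_pos ha]
        · rw [if_neg h'']; simpa using ha.le
    have := h _ hmem
    rw [inner_add_left, EuclideanSpace.inner_single_left, EuclideanSpace.inner_single_left] at this
    simp only [starRingEnd_apply, star_trivial] at this
    rw [hk, mul_zero, zero_add] at this
    rcases mul_eq_zero.mp this with h' | h'
    · exact absurd h' ha.ne'
    · exact h'

/-- A separating hyperplane must have the small facet on the minus side,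
the big one on the plus side, and strictly positive offset. -/
lemma sep_good {ℓ : ℕ} (i : Fin ℓ ⊕ Fin ℓ) {a b α : ℝ} {u : EuclideanSpace ℝ (Fin ℓ)}
    (ha : 0 < a) (hab : a < b) (hα : 0 ≤ α) (hu : ‖u‖ = 1)
    (hsep : Separates (facet ℓ i a) (facet ℓ i b) α u) :
    0 < α ∧ facet ℓ i b ⊆ Hplus ℓ α u := by
  have hb : 0 < b := ha.trans hab
  have hu0 : u ≠ 0 := by
    intro h0; rw [h0] at hu; simp at hu
  rcases hsep with ⟨hA, hB⟩ | ⟨hA, hB⟩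
  · exfalso
    apply hu0
    apply u_eq_zero_of_facet i ha
    intro x hx
    have h1 : α ≤ (inner ℝ x u : ℝ) := hA hx
    have h2 : (inner ℝ ((b / a) • x) u : ℝ) ≤ α := hB (smul_mem_facet i ha hb hx)
    rw [real_inner_smul_left] at h2
    set t := (inner ℝ x u : ℝ) with ht
    have h3 : b * t ≤ α * a := by
      rw [div_mul_eq_mul_div, div_le_iff₀ ha] at h2
      exact h2
    nlinarith
  · refine ⟨?_, hB⟩
    rcases lt_or_eq_of_le hα with h | h
    · exact h
    · exfalso
      apply hu0
      apply u_eq_zero_of_facet i ha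
      intro x hx
      have h1 : (inner ℝ x u : ℝ) ≤ α := hA hx
      have h2 : α ≤ (inner ℝ ((b / a) • x) u : ℝ) := hB (smul_mem_facet i ha hb hx)
      rw [real_inner_smul_left] at h2
      set t := (inner ℝ x u : ℝ) with ht
      rw [← h] at h1 h2
      have h3 : 0 * a ≤ b * t := by
        rw [div_mul_eq_mul_div, le_div_iff₀ ha] at h2
        exact h2
      nlinarith

/-- The sets `Ĝ_1(a,b), …, Ĝ_{2ℓ}(a,b)` are pairwise disjoint. -/
theorem stmt3 (ℓ : ℕ) (hℓ : 1 ≤ ℓ) (a b : ℝ) (ha : 0 < a) (hab : a < b)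
    (i j : Fin ℓ ⊕ Fin ℓ) (hij : i ≠ j) :
    ∀ p : ℝ × unitSphere ℓ, ¬(p ∈ Ghat ℓ i a b ∧ p ∈ Ghat ℓ j a b) := by
  rintro ⟨α, u⟩ ⟨⟨hα, hsepi⟩, ⟨_, hsepj⟩⟩
  have hu : ‖(u : EuclideanSpace ℝ (Fin ℓ))‖ = 1 := by
    have := u.2
    simpa using this
  have hb : 0 < b := ha.trans hab
  obtain ⟨hαpos, hBi⟩ := sep_good i ha hab hα hu hsepi
  obtain ⟨_, hBj⟩ := sep_good j ha hab hα hu hsepj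
  by_cases hax : axIdx i = axIdx j
  · -- same axis, opposite signs
    have hsgn : sgn j = -sgn i := by
      cases i with
      | inl k => cases j with
        | inl m => exact absurd (congrArg Sum.inl hax) hij
        | inr m => simp [sgn]
      | inr k => cases j with
        | inl m => simp [sgn]
        | inr m => exact absurd (congrArg Sum.inr hax) hij
    set x : EuclideanSpace ℝ (Fin ℓ) := EuclideanSpace.single (axIdx i) (sgn i * b) with hxdef
    have hxi : x ∈ facet ℓ i b := single_mem_facet i hb
    have hxj : -x ∈ facet ℓ j b := by
      have : -x = EuclideanSpace.single (axIdx j) (sgn j * b) := by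
        ext j'
        show -(EuclideanSpace.single (axIdx i) (sgn i * b) j') = _
        rw [hax, hsgn, EuclideanSpace.single_apply, EuclideanSpace.single_apply]
        by_cases h : j' = axIdx j
        · rw [if_pos h, if_pos h]; ring
        · rw [if_neg h, if_neg h]; ring
      rw [this]
      exact single_mem_facet j hb
    have h1 : α ≤ (inner ℝ x (u : EuclideanSpace ℝ (Fin ℓ)) : ℝ) := hBi hxi
    have h2 : α ≤ (inner ℝ (-x) (u : EuclideanSpace ℝ (Fin ℓ)) : ℝ) := hBj hxj
    rw [inner_neg_left] at h2
    linarith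
  · -- different axes
    set x : EuclideanSpace ℝ (Fin ℓ) :=
      EuclideanSpace.single (axIdx i) (sgn i * b) + EuclideanSpace.single (axIdx j) (-(sgn j * b))
      with hxdef
    have habs : |sgn i * b| ≤ b := by rw [abs_mul, abs_sgn, one_mul, abs_of_pos hb]
    have habs' : |sgn j * b| ≤ b := by rw [abs_mul, abs_sgn, one_mul, abs_of_pos hb]
    have hxi : x ∈ facet ℓ i b := by
      rw [mem_facet_iff]
      constructor
      · show (EuclideanSpace.single (axIdx i) (sgn i * b)) (axIdx i)
            + (EuclideanSpace.single (axIdx j) (-(sgn j * b))) (axIdx i) = sgn i * b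
        rw [EuclideanSpace.single_apply, EuclideanSpace.single_apply,
          if_pos rfl, if_neg hax]
        ring
      · intro j' hj'
        show |(EuclideanSpace.single (axIdx i) (sgn i * b)) j'
            + (EuclideanSpace.single (axIdx j) (-(sgn j * b))) j'| ≤ b
        rw [EuclideanSpace.single_apply, EuclideanSpace.single_apply, if_neg hj']
        by_cases h'' : j' = axIdx j
        · rw [if_pos h'']; rw [zero_add, abs_neg]; exact habs'
        · rw [if_neg h'']; simpa using hb.le
    have hxj : -x ∈ facet ℓ j b := by
      rw [mem_facet_iff]
      constructor
      · show -((EuclideanSpace.single (axIdx i) (sgn i * b)) (axIdx j)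
            + (EuclideanSpace.single (axIdx j) (-(sgn j * b))) (axIdx j)) = sgn j * b
        rw [EuclideanSpace.single_apply, EuclideanSpace.single_apply,
          if_pos rfl, if_neg (fun h => hax h.symm)]
        ring
      · intro j' hj'
        show |-( (EuclideanSpace.single (axIdx i) (sgn i * b)) j'
            + (EuclideanSpace.single (axIdx j) (-(sgn j * b))) j')| ≤ b
        rw [abs_neg, EuclideanSpace.single_apply, EuclideanSpace.single_apply, if_neg hj']
        by_cases h'' : j' = axIdx i
        · rw [if_pos h'']; rw [add_zero]; exact habs
        · rw [if_neg h'']; simpa using hb.le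
    have h1 : α ≤ (inner ℝ x (u : EuclideanSpace ℝ (Fin ℓ)) : ℝ) := hBi hxi
    have h2 : α ≤ (inner ℝ (-x) (u : EuclideanSpace ℝ (Fin ℓ)) : ℝ) := hBj hxj
    rw [inner_neg_left] at h2
    linarith

end
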